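/- For a vector field v and a second-order tensor field T on a surface S ⊂ ℝ³, the product rule div(v × T) = v × div(T) + ∇_S v ⨯ Tᵀ holds, where v × T is defined by (v × T) = v_i T_{lk} (e^i × e^l) ⊗ e^k and V ⨯ T is the scalar-cross product V_{ij} T_{lk} (e^j·e^l)(e^i × e^k). -/

import Mathlib

open Matrix MeasureTheory
noncomputable section

abbrev V3 := Fin 3 → ℝ
abbrev V2 := Fin 2 → ℝ
abbrev M3 := Matrix (Fin 3) (Fin 3) ℝ

/-- ambient partial derivative of a scalar field on ℝ³ -/
def pd (i : Fin 3) (f : V3 → ℝ) (x : V3) : ℝ := fderiv ℝ f x (Pi.single i 1)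
/-- ambient gradient ∇f -/
def grad (f : V3 → ℝ) (x : V3) : V3 := fun i => pd i f x
/-- ambient Jacobian (∇u)_{ij} = ∂u_i/∂x_j -/
def jac (u : V3 → V3) (x : V3) : M3 := fun i j => pd j (fun y => u y i) x
/-- ambient Hessian ∇∇f -/
def hess (f : V3 → ℝ) (x : V3) : M3 := fun i j => pd j (fun y => pd i f y) x
/-- dyadic (outer) product a ⊗ b -/
def outer (a b : V3) : M3 := vecMulVec a b
/-- Euclidean norm on ℝ³ -/
def norm3 (v : V3) : ℝ := Real.sqrt (v ⬝ᵥ v)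
/-- cross product on ℝ³ -/
def cross3 (a b : V3) : V3 := crossProduct a b
/-- standard Cartesian basis -/
def e3 (i : Fin 3) : V3 := Pi.single i 1

/-- parametric partial derivative of a scalar field on the parameter domain -/
def pd2 (α : Fin 2) (f : V2 → ℝ) (θ : V2) : ℝ := fderiv ℝ f θ (Pi.single α 1)
/-- parametric partial derivative of a vector field -/
def pdv2 (α : Fin 2) (f : V2 → V3) (θ : V2) : V3 := fun i => pd2 α (fun t => f t i) θ
/-- parametric partial derivative of a matrix (second-order tensor) field -/
def pdm2 (α : Fin 2) (T : V2 → M3) (θ : V2) : M3 := fun i j => pd2 α (fun t => T t i j) θ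

/-- covariant basis a_α = ∂r/∂θ^α -/
def cov (r : V2 → V3) (α : Fin 2) (θ : V2) : V3 := pdv2 α r θ
/-- first fundamental form g_{αβ} = a_α · a_β -/
def fff (r : V2 → V3) (θ : V2) : Matrix (Fin 2) (Fin 2) ℝ := fun α β => cov r α θ ⬝ᵥ cov r β θ
/-- contravariant basis a^α = g^{αβ} a_β -/
def contrav (r : V2 → V3) (α : Fin 2) (θ : V2) : V3 := ∑ β, (fff r θ)⁻¹ α β • cov r β θ
/-- unit normal n = (a_1 × a_2)/‖a_1 × a_2‖ -/
def nhat (r : V2 → V3) (θ : V2) : V3 :=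
  (norm3 (cross3 (cov r 0 θ) (cov r 1 θ)))⁻¹ • cross3 (cov r 0 θ) (cov r 1 θ)
/-- Christoffel symbols Γ^γ_{αβ} = a^γ · a_{α,β} -/
def christ (r : V2 → V3) (γ α β : Fin 2) (θ : V2) : ℝ := contrav r γ θ ⬝ᵥ pdv2 β (cov r α) θ
/-- second fundamental form h_{αβ} = −a_α · n_{,β} -/
def sff (r : V2 → V3) (α β : Fin 2) (θ : V2) : ℝ := -(cov r α θ ⬝ᵥ pdv2 β (nhat r) θ)
/-- mean curvature H = h^α_α = g^{αγ} h_{γα} -/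
def meanCurv (r : V2 → V3) (θ : V2) : ℝ := ∑ α, ∑ γ, (fff r θ)⁻¹ α γ * sff r γ α θ

/-- vector invariant [T]_× = T_{ij} e^i × e^j -/
def vecInv (T : M3) : V3 := ∑ i, ∑ j, T i j • cross3 (e3 i) (e3 j)
/-- scalar-cross product V ⨯ T = V_{ij} T_{lk} (e^j·e^l)(e^i × e^k) -/
def scalarCross (A B : M3) : V3 :=
  ∑ i, ∑ j, ∑ l, ∑ k, (A i j * B l k * (e3 j ⬝ᵥ e3 l)) • cross3 (e3 i) (e3 k)
/-- cross product of a vector and a second-order tensor,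
    v × T = v_i T_{lk} (e^i × e^l) ⊗ e^k -/
def crossT (v : V3) (T : M3) : M3 :=
  ∑ i, ∑ l, ∑ k, (v i * T l k) • outer (cross3 (e3 i) (e3 l)) (e3 k)


lemma fin3_mk0 (h : 0 < 3) : (⟨0, h⟩ : Fin 3) = 0 := rfl
lemma fin3_mk1 (h : 1 < 3) : (⟨1, h⟩ : Fin 3) = 1 := rfl
lemma fin3_mk2 (h : 2 < 3) : (⟨2, h⟩ : Fin 3) = 2 := rfl

lemma cross3_apply (a b : V3) :
    cross3 a b = ![a 1 * b 2 - a 2 * b 1, a 2 * b 0 - a 0 * b 2, a 0 * b 1 - a 1 * b 0] := by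
  simp [cross3, cross_apply]

set_option maxHeartbeats 2000000 in
lemma crossT_col (v : V3) (T : M3) (i j : Fin 3) :
    crossT v T i j = cross3 v (fun l => T l j) i := by
  simp only [crossT, Matrix.sum_apply, Matrix.add_apply, Pi.smul_apply, Matrix.smul_apply, smul_eq_mul, outer, vecMulVec_apply,
    cross3_apply, Fin.sum_univ_three]
  fin_cases i <;> fin_cases j <;>
    norm_num [e3, Pi.single_apply, Fin.ext_iff, fin3_mk2, Matrix.vecHead, Matrix.vecTail, Matrix.cons_val_two,
      Matrix.tail_cons] <;> ring

lemma crossT_col' (v : V3) (f : Fin 3 → Fin 3 → ℝ) (i j : Fin 3) :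
    crossT v f i j = cross3 v (fun l => f l j) i := crossT_col v f i j

lemma pd_sub (k : Fin 3) (f g : V3 → ℝ) (x : V3)
    (hf : DifferentiableAt ℝ f x) (hg : DifferentiableAt ℝ g x) :
    pd k (fun y => f y - g y) x = pd k f x - pd k g x := by
  simp [pd, fderiv_fun_sub hf hg]

lemma pd_mul (k : Fin 3) (f g : V3 → ℝ) (x : V3)
    (hf : DifferentiableAt ℝ f x) (hg : DifferentiableAt ℝ g x) :
    pd k (fun y => f y * g y) x = pd k f x * g x + f x * pd k g x := by
  simp [pd, fderiv_fun_mul hf hg]; ring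

lemma pd_cross_entry (v : V3 → V3) (hv : Differentiable ℝ v) (T : V3 → M3)
    (hT : ∀ i j, Differentiable ℝ fun y => T y i j) (x : V3) (k i j : Fin 3) :
    pd k (fun y => crossT (v y) (T y) i j) x
      = crossT (fun a => pd k (fun y => v y a) x) (T x) i j
        + crossT (v x) (fun l m => pd k (fun y => T y l m) x) i j := by
  have hva : ∀ a, DifferentiableAt ℝ (fun y => v y a) x :=
    fun a => (differentiable_pi.mp hv a) x
  simp only [crossT_col, crossT_col', cross3_apply]
  fin_cases i <;>
    simp only [fin3_mk0, fin3_mk1, fin3_mk2, Matrix.cons_val_zero, Matrix.cons_val_one,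
      Matrix.head_cons, Matrix.cons_val_two, Matrix.vecHead, Matrix.vecTail, Function.comp,
      Fin.succ_zero_eq_one, Matrix.cons_val_succ] <;>
    rw [pd_sub _ _ _ _ ((hva _).fun_mul ((hT _ _) x)) ((hva _).fun_mul ((hT _ _) x)),
      pd_mul _ _ _ _ (hva _) ((hT _ _) x), pd_mul _ _ _ _ (hva _) ((hT _ _) x)] <;>
    ring

set_option maxHeartbeats 4000000 in

/-- product rule div(v × T) = v × div(T) + ∇_S v ⨯ Tᵀ. -/
theorem divergence_product_rule_cross
    (n : V3) (hn : n ⬝ᵥ n = 1) (P : M3) (hP : P = 1 - outer n n)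
    (H : ℝ) (x : V3)
    (v : V3 → V3) (hv : Differentiable ℝ v)
    (T : V3 → M3) (hT : ∀ i j, Differentiable ℝ fun y => T y i j) :
    ((fun i => ∑ j, ∑ k, pd k (fun y => crossT (v y) (T y) i j) x * P j k)
        + H • (crossT (v x) (T x) *ᵥ n))
      = cross3 (v x)
          ((fun i => ∑ j, ∑ k, pd k (fun y => T y i j) x * P j k) + H • (T x *ᵥ n))
        + scalarCross (jac v x * P) (T x)ᵀ := by
  subst hP
  funext i
  simp only [Pi.add_apply, Pi.smul_apply, smul_eq_mul, Fin.sum_univ_three]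
  simp only [pd_cross_entry v hv T hT x]
  fin_cases i <;>
    simp only [crossT_col, crossT_col', cross3_apply, scalarCross, jac, Matrix.mulVec, dotProduct, Pi.add_apply,
      Matrix.mul_apply, outer, vecMulVec_apply, Matrix.one_apply, Matrix.transpose_apply, e3,
      Pi.single_apply, Fin.sum_univ_three, Finset.sum_apply, Pi.smul_apply, smul_eq_mul,
      Matrix.sub_apply, fin3_mk0, fin3_mk1, fin3_mk2, Matrix.cons_val_zero, Matrix.cons_val_one,
      Matrix.head_cons, Matrix.cons_val_two, Matrix.vecHead, Matrix.vecTail, Function.comp,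
      Fin.succ_zero_eq_one, Matrix.cons_val_succ] <;>
    norm_num [Fin.ext_iff] <;> ring
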